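/- Let U ⊆ ℂ be open and φ₁, φ₂, φ₃ : ℂ → ℂ be holomorphic on U with φ₁² + φ₂² + φ₃² = 0 on U and λ := (|φ₁|² + |φ₂|² + |φ₃|²)/2 > 0 on U. Define real-valued functions α := −Im(φ₂·conj(φ₃))/λ, β := −Im(φ₃·conj(φ₁))/λ, γ := −Im(φ₁·conj(φ₂))/λ on U (equivalently, −2iλα = φ₂·conj(φ₃) − φ₃·conj(φ₂) and cyclically). Then at every z ∈ U, φ₂(z)·∂̄α(z) = φ₁(z)·∂̄β(z) and φ₃(z)·∂̄β(z) = φ₂(z)·∂̄γ(z); that is, φ₁⁻¹ ∂α/∂z̄ = φ₂⁻¹ ∂β/∂z̄ = φ₃⁻¹ ∂γ/∂z̄ wherever the φ_j are nonzero. -/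

import Mathlib

open Complex ComplexConjugate

/-- The Wirtinger derivative with respect to `z̄` of a map `ℂ → ℂ`,
viewed as a map between real vector spaces. -/
noncomputable def dbar (h : ℂ → ℂ) (z : ℂ) : ℂ :=
  (1 / 2) * (fderiv ℝ h z 1 + Complex.I • fderiv ℝ h z Complex.I)

lemma fderiv_holo_apply {f : ℂ → ℂ} {z : ℂ} (hf : DifferentiableAt ℂ f z) (v : ℂ) :
    fderiv ℝ f z v = deriv f z * v := by
  rw [(hf.hasFDerivAt.restrictScalars ℝ).fderiv]
  simp only [ContinuousLinearMap.coe_restrictScalars']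
  have h1 : fderiv ℂ f z v = v • fderiv ℂ f z 1 := by
    rw [← map_smul]; simp
  rw [h1, fderiv_apply_one_eq_deriv]
  simp [smul_eq_mul, mul_comm]

lemma dbar_congr {f g : ℂ → ℂ} {z : ℂ} (h : f =ᶠ[nhds z] g) : dbar f z = dbar g z := by
  unfold dbar; rw [h.fderiv_eq]

lemma dbar_holo {f : ℂ → ℂ} {z : ℂ} (hf : DifferentiableAt ℂ f z) : dbar f z = 0 := by
  unfold dbar
  rw [fderiv_holo_apply hf, fderiv_holo_apply hf]
  simp only [smul_eq_mul]
  ring_nf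
  simp [Complex.I_sq]

lemma diffat_conj {q : ℂ → ℂ} {z : ℂ} (hq : DifferentiableAt ℝ q z) :
    DifferentiableAt ℝ (fun w => conj (q w)) z :=
  (Complex.conjCLE.differentiable.differentiableAt).comp z hq

lemma dbar_conj {f : ℂ → ℂ} {z : ℂ} (hf : DifferentiableAt ℂ f z) :
    dbar (fun w => conj (f w)) z = conj (deriv f z) := by
  have hc : HasFDerivAt (fun w => conj (f w))
      ((Complex.conjCLE.toContinuousLinearMap).comp ((fderiv ℂ f z).restrictScalars ℝ)) z :=
    (Complex.conjCLE.toContinuousLinearMap.hasFDerivAt).comp z (hf.hasFDerivAt.restrictScalars ℝ)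
  unfold dbar
  rw [hc.fderiv]
  simp only [ContinuousLinearMap.comp_apply, ContinuousLinearMap.coe_restrictScalars',
    ContinuousLinearEquiv.coe_coe]
  have h1 : fderiv ℂ f z 1 = deriv f z := fderiv_apply_one_eq_deriv
  have hI : fderiv ℂ f z Complex.I = Complex.I * deriv f z := by
    have : fderiv ℂ f z Complex.I = Complex.I • fderiv ℂ f z 1 := by rw [← map_smul]; simp
    rw [this, h1]; simp [smul_eq_mul]
  rw [h1, hI]
  simp only [Complex.conjCLE_apply, map_mul, Complex.conj_I, smul_eq_mul]
  ring_nf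
  simp [Complex.I_sq]
  ring

lemma dbar_add {f g : ℂ → ℂ} {z : ℂ} (hf : DifferentiableAt ℝ f z) (hg : DifferentiableAt ℝ g z) :
    dbar (fun w => f w + g w) z = dbar f z + dbar g z := by
  unfold dbar
  rw [fderiv_fun_add hf hg]
  simp only [ContinuousLinearMap.add_apply, smul_eq_mul]
  ring

lemma dbar_mul {f g : ℂ → ℂ} {z : ℂ} (hf : DifferentiableAt ℝ f z) (hg : DifferentiableAt ℝ g z) :
    dbar (fun w => f w * g w) z = f z * dbar g z + g z * dbar f z := by
  unfold dbar
  rw [fderiv_fun_mul hf hg]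
  simp only [ContinuousLinearMap.add_apply, ContinuousLinearMap.smul_apply, smul_eq_mul]
  ring

lemma dbar_sub {f g : ℂ → ℂ} {z : ℂ} (hf : DifferentiableAt ℝ f z) (hg : DifferentiableAt ℝ g z) :
    dbar (fun w => f w - g w) z = dbar f z - dbar g z := by
  unfold dbar
  rw [fderiv_fun_sub hf hg]
  simp only [ContinuousLinearMap.sub_apply, smul_eq_mul]
  ring

lemma dbar_comp {φ g : ℂ → ℂ} {z : ℂ} (hφ : DifferentiableAt ℂ φ (g z))
    (hg : DifferentiableAt ℝ g z) :
    dbar (fun w => φ (g w)) z = deriv φ (g z) * dbar g z := by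
  have h : fderiv ℝ (φ ∘ g) z = (fderiv ℝ φ (g z)).comp (fderiv ℝ g z) :=
    fderiv_comp z (hφ.restrictScalars ℝ) hg
  unfold dbar
  rw [show (fun w => φ (g w)) = φ ∘ g from rfl, h]
  simp only [ContinuousLinearMap.comp_apply, fderiv_holo_apply hφ, smul_eq_mul]
  ring

lemma dbar_inv {g : ℂ → ℂ} {z : ℂ} (hg : DifferentiableAt ℝ g z) (h0 : g z ≠ 0) :
    dbar (fun w => (g w)⁻¹) z = -(dbar g z) / g z ^ 2 := by
  have hφ : DifferentiableAt ℂ (fun w : ℂ => w⁻¹) (g z) := differentiableAt_inv h0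
  have := dbar_comp hφ hg
  rw [this, deriv_inv]
  field_simp

lemma dbar_quot {p q G : ℂ → ℂ} {z : ℂ} (hp : DifferentiableAt ℂ p z)
    (hq : DifferentiableAt ℂ q z) (hG : DifferentiableAt ℝ G z) (hG0 : G z ≠ 0) :
    dbar (fun w => Complex.I * (p w * conj (q w) - q w * conj (p w)) * (G w)⁻¹) z
      = Complex.I * ((p z * conj (deriv q z) - q z * conj (deriv p z)) * G z
          - (p z * conj (q z) - q z * conj (p z)) * dbar G z) / G z ^ 2 := by
  set F : ℂ → ℂ := fun w => p w * conj (q w) - q w * conj (p w) with hF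
  have hpr := hp.restrictScalars ℝ
  have hqr := hq.restrictScalars ℝ
  have hFd : DifferentiableAt ℝ F z :=
    (hpr.mul (diffat_conj hqr)).sub (hqr.mul (diffat_conj hpr))
  have hFval : dbar F z = p z * conj (deriv q z) - q z * conj (deriv p z) := by
    rw [hF]
    rw [dbar_sub (hpr.fun_mul (diffat_conj hqr)) (hqr.fun_mul (diffat_conj hpr)),
      dbar_mul hpr (diffat_conj hqr), dbar_mul hqr (diffat_conj hpr),
      dbar_conj hq, dbar_conj hp, dbar_holo hp, dbar_holo hq]
    ring
  have hIF : DifferentiableAt ℝ (fun w => Complex.I * F w) z := hFd.const_mul _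
  have hIFval : dbar (fun w => Complex.I * F w) z = Complex.I * dbar F z := by
    have := dbar_mul (differentiableAt_const (Complex.I) : DifferentiableAt ℝ _ z) hFd
    simpa [dbar_holo (differentiableAt_const Complex.I : DifferentiableAt ℂ _ z)] using this
  have hGinv : DifferentiableAt ℝ (fun w => (G w)⁻¹) z :=
    (((differentiableAt_inv hG0 : DifferentiableAt ℂ (fun w : ℂ => w⁻¹) (G z))).restrictScalars ℝ).comp z hG
  rw [show (fun w => Complex.I * F w * (G w)⁻¹) = fun w => (Complex.I * F w) * (G w)⁻¹ from rfl]
  rw [dbar_mul hIF hGinv, dbar_inv hG hG0, hIFval, hFval]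
  field_simp
  ring

lemma key_alg (a b c A B C A' B' C' : ℂ) (h : a ^ 2 + b ^ 2 + c ^ 2 = 0) :
    b * (Complex.I * ((b * C' - c * B') * (a * A + b * B + c * C)
        - (b * C - c * B) * (a * A' + b * B' + c * C')))
      = a * (Complex.I * ((c * A' - a * C') * (a * A + b * B + c * C)
        - (c * A - a * C) * (a * A' + b * B' + c * C'))) := by
  linear_combination (Complex.I * ((a * A + b * B + c * C) * C'
    - (a * A' + b * B' + c * C') * C)) * h

lemma key_alg2 (a b c A B C A' B' C' : ℂ) (h : a ^ 2 + b ^ 2 + c ^ 2 = 0) :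
    c * (Complex.I * ((c * A' - a * C') * (a * A + b * B + c * C)
        - (c * A - a * C) * (a * A' + b * B' + c * C')))
      = b * (Complex.I * ((a * B' - b * A') * (a * A + b * B + c * C)
        - (a * B - b * A) * (a * A' + b * B' + c * C'))) := by
  linear_combination (Complex.I * ((a * A + b * B + c * C) * A'
    - (a * A' + b * B' + c * C') * A)) * h

theorem gauss_map_dbar_proportionality
    (U : Set ℂ) (hU : IsOpen U) (φ₁ φ₂ φ₃ : ℂ → ℂ)
    (hφ₁ : DifferentiableOn ℂ φ₁ U) (hφ₂ : DifferentiableOn ℂ φ₂ U)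
    (hφ₃ : DifferentiableOn ℂ φ₃ U)
    (hsum : ∀ z ∈ U, φ₁ z ^ 2 + φ₂ z ^ 2 + φ₃ z ^ 2 = 0)
    (lam : ℂ → ℝ)
    (hlam : lam = fun z =>
      (‖φ₁ z‖ ^ 2 + ‖φ₂ z‖ ^ 2 + ‖φ₃ z‖ ^ 2) / 2)
    (hpos : ∀ z ∈ U, 0 < lam z)
    (α β γ : ℂ → ℂ)
    (hα : α = fun z => (↑(-((φ₂ z * conj (φ₃ z)).im / lam z)) : ℂ))
    (hβ : β = fun z => (↑(-((φ₃ z * conj (φ₁ z)).im / lam z)) : ℂ))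
    (hγ : γ = fun z => (↑(-((φ₁ z * conj (φ₂ z)).im / lam z)) : ℂ)) :
    ∀ z ∈ U,
      φ₂ z * dbar α z = φ₁ z * dbar β z ∧ φ₃ z * dbar β z = φ₂ z * dbar γ z := by
  intro z hz
  have hmem := hU.mem_nhds hz
  have h1 : DifferentiableAt ℂ φ₁ z := hφ₁.differentiableAt hmem
  have h2 : DifferentiableAt ℂ φ₂ z := hφ₂.differentiableAt hmem
  have h3 : DifferentiableAt ℂ φ₃ z := hφ₃.differentiableAt hmem
  set G : ℂ → ℂ := fun w =>
    φ₁ w * conj (φ₁ w) + φ₂ w * conj (φ₂ w) + φ₃ w * conj (φ₃ w) with hGdef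
  have hGval : ∀ w, G w = ((2 * lam w : ℝ) : ℂ) := by
    intro w
    rw [hlam, hGdef]
    simp only [Complex.mul_conj]
    push_cast [Complex.sq_norm]
    ring
  have hG0 : G z ≠ 0 := by
    rw [hGval]
    have := hpos z hz
    simp only [ne_eq, Complex.ofReal_eq_zero]
    positivity
  have hGd : DifferentiableAt ℝ G z := by
    have d1 := h1.restrictScalars ℝ
    have d2 := h2.restrictScalars ℝ
    have d3 := h3.restrictScalars ℝ
    exact ((d1.mul (diffat_conj d1)).add (d2.mul (diffat_conj d2))).add
      (d3.mul (diffat_conj d3))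
  have hGm : dbar G z = φ₁ z * conj (deriv φ₁ z) + φ₂ z * conj (deriv φ₂ z)
      + φ₃ z * conj (deriv φ₃ z) := by
    have d1 := h1.restrictScalars ℝ
    have d2 := h2.restrictScalars ℝ
    have d3 := h3.restrictScalars ℝ
    rw [hGdef]
    rw [dbar_add ((d1.fun_mul (diffat_conj d1)).fun_add (d2.fun_mul (diffat_conj d2)))
        (d3.fun_mul (diffat_conj d3)),
      dbar_add (d1.fun_mul (diffat_conj d1)) (d2.fun_mul (diffat_conj d2)),
      dbar_mul d1 (diffat_conj d1), dbar_mul d2 (diffat_conj d2),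
      dbar_mul d3 (diffat_conj d3),
      dbar_conj h1, dbar_conj h2, dbar_conj h3, dbar_holo h1, dbar_holo h2, dbar_holo h3]
    ring
  -- rewrite α, β, γ on U
  have habc : ∀ (p q : ℂ → ℂ) (δ : ℂ → ℂ),
      (δ = fun w => (↑(-((p w * conj (q w)).im / lam w)) : ℂ)) →
      ∀ w ∈ U, δ w = Complex.I * (p w * conj (q w) - q w * conj (p w)) * (G w)⁻¹ := by
    intro p q δ hδ w hw
    have hlw : (lam w : ℝ) ≠ 0 := (hpos w hw).ne'
    rw [hδ, hGval]
    have hconj : conj (p w * conj (q w)) = q w * conj (p w) := by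
      rw [map_mul]
      simp [mul_comm]
    have hsc := Complex.sub_conj (p w * conj (q w))
    rw [hconj] at hsc
    rw [hsc]
    have h2l : ((2 * lam w : ℝ) : ℂ) ≠ 0 := by
      simp only [ne_eq, Complex.ofReal_eq_zero]
      exact mul_ne_zero two_ne_zero hlw
    field_simp
    ring_nf
    simp [Complex.I_sq]
    ring
  have hαz : dbar α z = Complex.I * ((φ₂ z * conj (deriv φ₃ z) - φ₃ z * conj (deriv φ₂ z)) * G z
      - (φ₂ z * conj (φ₃ z) - φ₃ z * conj (φ₂ z)) * dbar G z) / G z ^ 2 := by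
    rw [dbar_congr (Filter.eventuallyEq_of_mem hmem (habc φ₂ φ₃ α hα))]
    exact dbar_quot h2 h3 hGd hG0
  have hβz : dbar β z = Complex.I * ((φ₃ z * conj (deriv φ₁ z) - φ₁ z * conj (deriv φ₃ z)) * G z
      - (φ₃ z * conj (φ₁ z) - φ₁ z * conj (φ₃ z)) * dbar G z) / G z ^ 2 := by
    rw [dbar_congr (Filter.eventuallyEq_of_mem hmem (habc φ₃ φ₁ β hβ))]
    exact dbar_quot h3 h1 hGd hG0
  have hγz : dbar γ z = Complex.I * ((φ₁ z * conj (deriv φ₂ z) - φ₂ z * conj (deriv φ₁ z)) * G z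
      - (φ₁ z * conj (φ₂ z) - φ₂ z * conj (φ₁ z)) * dbar G z) / G z ^ 2 := by
    rw [dbar_congr (Filter.eventuallyEq_of_mem hmem (habc φ₁ φ₂ γ hγ))]
    exact dbar_quot h1 h2 hGd hG0
  have hGz : G z = φ₁ z * conj (φ₁ z) + φ₂ z * conj (φ₂ z) + φ₃ z * conj (φ₃ z) := rfl
  have h0 := hsum z hz
  constructor
  · rw [hαz, hβz, hGz, hGm, ← mul_div_assoc, ← mul_div_assoc]
    rw [key_alg (φ₁ z) (φ₂ z) (φ₃ z) (conj (φ₁ z)) (conj (φ₂ z)) (conj (φ₃ z))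
      (conj (deriv φ₁ z)) (conj (deriv φ₂ z)) (conj (deriv φ₃ z)) h0]
  · rw [hβz, hγz, hGz, hGm, ← mul_div_assoc, ← mul_div_assoc]
    rw [key_alg2 (φ₁ z) (φ₂ z) (φ₃ z) (conj (φ₁ z)) (conj (φ₂ z)) (conj (φ₃ z))
      (conj (deriv φ₁ z)) (conj (deriv φ₂ z)) (conj (deriv φ₃ z)) h0]
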